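/- arXiv:2006.12345 — 3 statements merged into one kernel-verified Lean document; each statement's English description precedes it below -/
import Mathlib

section
/- Let K and C_1, …, C_r be convex subsets of ℝ^N such that the union C = C_1 ∪ ⋯ ∪ C_r is itself convex. Then the convex hull of K ∪ C equals the union over i = 1, …, r of the convex hulls of K ∪ C_i. -/
theorem stmt0 {N : ℕ} (K : Set (Fin N → ℝ)) {r : ℕ} (hr : 0 < r)
    (C : Fin r → Set (Fin N → ℝ))
    (hK : Convex ℝ K) (hC : ∀ i, Convex ℝ (C i)) (hU : Convex ℝ (⋃ i, C i)) :
    convexHull ℝ (K ∪ ⋃ i, C i) = ⋃ i, convexHull ℝ (K ∪ C i) := by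
  apply Set.Subset.antisymm
  · rcases Set.eq_empty_or_nonempty K with hK0 | hK0
    · subst hK0
      simp only [Set.empty_union, hU.convexHull_eq]
      exact Set.iUnion_mono fun i => subset_convexHull ℝ _
    rcases Set.eq_empty_or_nonempty (⋃ i, C i) with hC0 | hC0
    · rw [hC0, Set.union_empty, hK.convexHull_eq]
      intro x hx
      exact Set.mem_iUnion.2 ⟨⟨0, hr⟩, subset_convexHull ℝ _ (Or.inl hx)⟩
    · rw [hK.convexHull_union hU hK0 hC0]
      rintro z hz
      rw [mem_convexJoin] at hz
      obtain ⟨x, hx, y, hy, hz⟩ := hz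
      obtain ⟨i, hyi⟩ := Set.mem_iUnion.1 hy
      exact Set.mem_iUnion.2 ⟨i, (segment_subset_convexJoin hx hyi).trans
        (convexJoin_subset_convexHull _ _) hz⟩
  · exact Set.iUnion_subset fun i => convexHull_mono
      (Set.union_subset_union_right K (Set.subset_iUnion C i))
end

section
/- Let V = V_1 ⊕ ⋯ ⊕ V_k be a direct (internal) sum decomposition of a subspace of ℝ^N. For each i, let C^i_1, …, C^i_{r_i} be convex subsets of V_i such that the union ⋃_j C^i_j is convex. Then the convex hull of the union of all the sets C^i_j (over all i and j) equals the union, over all tuples (j_1, …, j_k) with j_i ∈ {1,…,r_i}, of the convex hulls conv(C^1_{j_1} ∪ ⋯ ∪ C^k_{j_k}). -/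
open Finset in
lemma rep_lemma {k : ℕ} {E : Type*} [AddCommGroup E] [Module ℝ E]
    (A : Fin k → Set E) (hA : ∀ i, Convex ℝ (A i)) (x : E) :
    x ∈ convexHull ℝ (⋃ i, A i) ↔
      ∃ w : Fin k → ℝ, ∃ a : Fin k → E, (∀ i, 0 ≤ w i) ∧ (∑ i, w i = 1) ∧
        (∀ i, w i ≠ 0 → a i ∈ A i) ∧ (∑ i, w i • a i = x) := by
  classical
  constructor
  · intro hx
    have hmin : convexHull ℝ (⋃ i, A i) ⊆
        {x : E | ∃ w : Fin k → ℝ, ∃ a : Fin k → E, (∀ i, 0 ≤ w i) ∧ (∑ i, w i = 1) ∧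
          (∀ i, w i ≠ 0 → a i ∈ A i) ∧ (∑ i, w i • a i = x)} := by
      apply convexHull_min
      · intro y hy
        obtain ⟨i, hi⟩ := Set.mem_iUnion.1 hy
        refine ⟨fun i' => if i' = i then 1 else 0, fun _ => y, ?_, ?_, ?_, ?_⟩
        · intro i'
          dsimp only
          split <;> norm_num
        · simp
        · intro i' hi'
          by_cases h : i' = i
          · subst h; exact hi
          · simp [h] at hi'
        · simp [ite_smul]
      · rintro p ⟨s, a, hs0, hs1, hsa, hsx⟩ q ⟨t, b, ht0, ht1, htb, hty⟩ θ η hθ hη hθη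
        refine ⟨fun i => θ * s i + η * t i,
          fun i => if h : θ * s i + η * t i = 0 then 0
            else (θ * s i / (θ * s i + η * t i)) • a i
              + (η * t i / (θ * s i + η * t i)) • b i, ?_, ?_, ?_, ?_⟩
        · intro i
          exact add_nonneg (mul_nonneg hθ (hs0 i)) (mul_nonneg hη (ht0 i))
        · rw [Finset.sum_add_distrib, ← Finset.mul_sum, ← Finset.mul_sum, hs1, ht1]
          linarith
        · intro i hwi
          have hsi : 0 ≤ θ * s i := mul_nonneg hθ (hs0 i)
          have hti : 0 ≤ η * t i := mul_nonneg hη (ht0 i)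
          have hw : 0 < θ * s i + η * t i := lt_of_le_of_ne (add_nonneg hsi hti) (Ne.symm hwi)
          simp only [dif_neg hwi]
          by_cases h1 : θ * s i = 0
          · have h2 : η * t i = θ * s i + η * t i := by linarith
            have ht : t i ≠ 0 := by
              intro h; rw [h1, h, mul_zero] at hw; simp at hw
            rw [h1]
            simp only [zero_div, zero_smul, zero_add, ← h2]
            rw [div_self (by linarith : η * t i ≠ 0), one_smul]
            exact htb i ht
          · by_cases h2 : η * t i = 0
            · have h3 : θ * s i = θ * s i + η * t i := by linarith
              have hsne : s i ≠ 0 := fun h => h1 (by rw [h, mul_zero])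
              rw [h2]
              simp only [zero_div, zero_smul, add_zero, ← h3]
              rw [div_self h1, one_smul]
              exact hsa i hsne
            · have hsne : s i ≠ 0 := fun h => h1 (by rw [h, mul_zero])
              have htne : t i ≠ 0 := fun h => h2 (by rw [h, mul_zero])
              exact hA i (hsa i hsne) (htb i htne)
                (div_nonneg hsi hw.le) (div_nonneg hti hw.le)
                (by field_simp)
        · have : ∀ i : Fin k, (θ * s i + η * t i) •
              (if h : θ * s i + η * t i = 0 then 0
                else (θ * s i / (θ * s i + η * t i)) • a i
                  + (η * t i / (θ * s i + η * t i)) • b i)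
              = (θ * s i) • a i + (η * t i) • b i := by
            intro i
            by_cases h : θ * s i + η * t i = 0
            · have hsi : 0 ≤ θ * s i := mul_nonneg hθ (hs0 i)
              have hti : 0 ≤ η * t i := mul_nonneg hη (ht0 i)
              have h1 : θ * s i = 0 := by linarith
              have h2 : η * t i = 0 := by linarith
              simp [h, h1, h2]
            · rw [dif_neg h, smul_add, smul_smul, smul_smul,
                mul_div_cancel₀ _ h, mul_div_cancel₀ _ h]
          rw [Finset.sum_congr rfl (fun i _ => this i), Finset.sum_add_distrib]
          rw [← hsx, ← hty, Finset.smul_sum, Finset.smul_sum]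
          simp [smul_smul]
    exact hmin hx
  · rintro ⟨w, a, hw0, hw1, ha, hx⟩
    have hsub : ∀ i, w i ≠ 0 → a i ∈ convexHull ℝ (⋃ i, A i) := fun i hi =>
      subset_convexHull ℝ _ (Set.mem_iUnion.2 ⟨i, ha i hi⟩)
    set t := Finset.univ.filter (fun i => w i ≠ 0) with ht
    have hwt : ∑ i ∈ t, w i = 1 := by
      rw [← hw1]
      exact Finset.sum_filter_ne_zero _
    have hxt : ∑ i ∈ t, w i • a i = x := by
      rw [← hx]
      apply Finset.sum_subset (Finset.filter_subset _ _)
      intro i _ hi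
      simp only [ht, Finset.mem_filter, Finset.mem_univ, true_and, not_not] at hi
      rw [hi, zero_smul]
    rw [← hxt]
    exact (convex_convexHull ℝ _).sum_mem
      (fun i hi => hw0 i) hwt
      (fun i hi => hsub i (by simpa [ht] using hi))

theorem stmt1 {N k : ℕ} (V : Submodule ℝ (Fin N → ℝ)) (Vi : Fin k → Submodule ℝ (Fin N → ℝ))
    (hV : V = ⨆ i, Vi i) (hindep : iSupIndep Vi)
    (r : Fin k → ℕ) (hr : ∀ i, 0 < r i)
    (C : ∀ i : Fin k, Fin (r i) → Set (Fin N → ℝ))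
    (hsub : ∀ i j, C i j ⊆ (Vi i : Set (Fin N → ℝ)))
    (hconv : ∀ i j, Convex ℝ (C i j))
    (hUconv : ∀ i, Convex ℝ (⋃ j, C i j)) :
    convexHull ℝ (⋃ i, ⋃ j, C i j) =
      ⋃ j : (∀ i : Fin k, Fin (r i)), convexHull ℝ (⋃ i, C i (j i)) := by
  classical
  apply Set.Subset.antisymm
  · apply convexHull_min
    · intro x hx
      obtain ⟨i, hi⟩ := Set.mem_iUnion.1 hx
      obtain ⟨j, hj⟩ := Set.mem_iUnion.1 hi
      refine Set.mem_iUnion.2 ⟨Function.update (fun i' => ⟨0, hr i'⟩) i j, ?_⟩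
      apply subset_convexHull
      refine Set.mem_iUnion.2 ⟨i, ?_⟩
      rw [Function.update_self]
      exact hj
    · rintro x hx y hy θ η hθ hη hθη
      obtain ⟨J, hJ⟩ := Set.mem_iUnion.1 hx
      obtain ⟨J', hJ'⟩ := Set.mem_iUnion.1 hy
      obtain ⟨s, a, hs0, hs1, hsa, hsx⟩ :=
        (rep_lemma (fun i => C i (J i)) (fun i => hconv i (J i)) x).1 hJ
      obtain ⟨t, b, ht0, ht1, htb, hty⟩ :=
        (rep_lemma (fun i => C i (J' i)) (fun i => hconv i (J' i)) y).1 hJ'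
      -- combined weights and points
      set w : Fin k → ℝ := fun i => θ * s i + η * t i with hw
      have hw0 : ∀ i, 0 ≤ w i := fun i =>
        add_nonneg (mul_nonneg hθ (hs0 i)) (mul_nonneg hη (ht0 i))
      set c : Fin k → (Fin N → ℝ) := fun i =>
        if h : w i = 0 then 0
        else (θ * s i / w i) • a i + (η * t i / w i) • b i with hc
      -- each c i (with nonzero weight) lies in the union over j, hence in some C i j'
      have hcmem : ∀ i, w i ≠ 0 → c i ∈ ⋃ j, C i j := by
        intro i hwi
        have hsi : 0 ≤ θ * s i := mul_nonneg hθ (hs0 i)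
        have hti : 0 ≤ η * t i := mul_nonneg hη (ht0 i)
        have hwpos : 0 < w i := lt_of_le_of_ne (hw0 i) (Ne.symm hwi)
        simp only [hc, dif_neg hwi]
        by_cases h1 : θ * s i = 0
        · have h2 : η * t i = w i := by simp only [hw]; linarith
          have htne : t i ≠ 0 := by
            intro h
            apply hwi
            simp only [hw]
            simp [h1, h]
          rw [h1]
          simp only [zero_div, zero_smul, zero_add, h2]
          rw [div_self hwi, one_smul]
          exact Set.mem_iUnion.2 ⟨J' i, htb i htne⟩
        · by_cases h2 : η * t i = 0
          · have h3 : θ * s i = w i := by simp only [hw]; linarith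
            have hsne : s i ≠ 0 := fun h => h1 (by rw [h, mul_zero])
            rw [h2]
            simp only [zero_div, zero_smul, add_zero, h3]
            rw [div_self hwi, one_smul]
            exact Set.mem_iUnion.2 ⟨J i, hsa i hsne⟩
          · have hsne : s i ≠ 0 := fun h => h1 (by rw [h, mul_zero])
            have htne : t i ≠ 0 := fun h => h2 (by rw [h, mul_zero])
            exact hUconv i (Set.mem_iUnion.2 ⟨J i, hsa i hsne⟩)
              (Set.mem_iUnion.2 ⟨J' i, htb i htne⟩)
              (div_nonneg hsi hwpos.le) (div_nonneg hti hwpos.le)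
              (by field_simp; rfl)
      -- choose an index for each coordinate
      choose JJf hJJf using fun i (h : w i ≠ 0) => Set.mem_iUnion.1 (hcmem i h)
      set JJ : ∀ i : Fin k, Fin (r i) := fun i =>
        if h : w i = 0 then ⟨0, hr i⟩ else JJf i h with hJJ
      refine Set.mem_iUnion.2 ⟨JJ, ?_⟩
      rw [rep_lemma (fun i => C i (JJ i)) (fun i => hconv i (JJ i))]
      refine ⟨w, c, hw0, ?_, ?_, ?_⟩
      · simp only [hw]
        rw [Finset.sum_add_distrib, ← Finset.mul_sum, ← Finset.mul_sum, hs1, ht1]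
        linarith
      · intro i hwi
        simp only [hJJ, dif_neg hwi]
        exact hJJf i hwi
      · have key : ∀ i : Fin k, w i • c i = (θ * s i) • a i + (η * t i) • b i := by
          intro i
          by_cases h : w i = 0
          · have hsi : 0 ≤ θ * s i := mul_nonneg hθ (hs0 i)
            have hti : 0 ≤ η * t i := mul_nonneg hη (ht0 i)
            have h1 : θ * s i = 0 := by
              have := hw ▸ h; simp only [hw] at h; linarith
            have h2 : η * t i = 0 := by simp only [hw] at h; linarith
            simp [h, h1, h2]
          · simp only [hc, dif_neg h, smul_add, smul_smul,
              mul_div_cancel₀ _ h]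
        rw [Finset.sum_congr rfl (fun i _ => key i), Finset.sum_add_distrib]
        rw [← hsx, ← hty, Finset.smul_sum, Finset.smul_sum]
        simp [smul_smul]
  · refine Set.iUnion_subset fun J => convexHull_mono ?_
    refine Set.iUnion_subset fun i => ?_
    intro z hz
    exact Set.mem_iUnion₂.2 ⟨i, J i, hz⟩
end

section
/- Let f be a homeomorphism of a compact metric space X, and let U be an open neighbourhood of the non-wandering set Ω(f). Then there exists a positive integer κ such that for every x ∈ X, the set of integers n ∈ ℤ with f^n(x) ∉ U has cardinality less than κ. -/
/-- The non-wandering set of a map: points every neighbourhood of which returns to itself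
under some positive iterate. -/
def nonWanderingSet {X : Type*} [TopologicalSpace X] (f : X → X) : Set X :=
  {x | ∀ U ∈ nhds x, ∃ n ≥ 1, ∃ y ∈ U, f^[n] y ∈ U}

theorem stmt6 {X : Type*} [MetricSpace X] [CompactSpace X] (f : X ≃ₜ X)
    (U : Set X) (hU : IsOpen U) (hΩ : nonWanderingSet ⇑f ⊆ U) :
    ∃ κ : ℕ, 0 < κ ∧ ∀ x : X,
      {n : ℤ | ((f.toEquiv ^ n : Equiv.Perm X) x) ∉ U}.Finite ∧
      {n : ℤ | ((f.toEquiv ^ n : Equiv.Perm X) x) ∉ U}.ncard < κ := by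
  classical
  have key : ∀ x ∈ Uᶜ, ∃ W ∈ nhds x, ∀ n, 1 ≤ n → ∀ y ∈ W, f^[n] y ∉ W := by
    intro x hx
    have hx' : x ∉ nonWanderingSet ⇑f := fun h => hx (hΩ h)
    simp only [nonWanderingSet, Set.mem_setOf_eq] at hx'
    push_neg at hx'
    obtain ⟨W, hW, hW2⟩ := hx'
    exact ⟨W, hW, fun n hn y hy => hW2 n hn y hy⟩
  choose! W hW1 hW2 using key
  obtain ⟨t, htK, htcov⟩ := (hU.isClosed_compl.isCompact).elim_nhds_subcover W hW1
  refine ⟨t.card + 1, Nat.succ_pos _, fun x => ?_⟩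
  set S := {n : ℤ | ((f.toEquiv ^ n : Equiv.Perm X) x) ∉ U} with hSdef
  have hmem : ∀ n ∈ S, ∃ a ∈ t, ((f.toEquiv ^ n : Equiv.Perm X) x) ∈ W a := by
    intro n hn
    have h1 : ((f.toEquiv ^ n : Equiv.Perm X) x) ∈ ⋃ a ∈ t, W a := htcov hn
    simpa using h1
  have : Nonempty X := ⟨x⟩
  choose! g hg1 hg2 using hmem
  have hinj : Set.InjOn g S := by
    intro n hn m hm hnm
    by_contra hne
    wlog hlt : n < m generalizing n m
    · exact this hm hn hnm.symm (Ne.symm hne) (by omega)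
    have han : ((f.toEquiv ^ n : Equiv.Perm X) x) ∈ W (g n) := hg2 n hn
    have ham : ((f.toEquiv ^ m : Equiv.Perm X) x) ∈ W (g n) := by
      rw [hnm]; exact hg2 m hm
    set k := (m - n).toNat with hk
    have hk1 : 1 ≤ k := by omega
    have hkey : ((f.toEquiv ^ m : Equiv.Perm X) x)
        = f^[k] (((f.toEquiv ^ n : Equiv.Perm X) x)) := by
      have hm' : m = (k : ℤ) + n := by omega
      rw [hm', zpow_add, Equiv.Perm.mul_apply, zpow_natCast, Equiv.Perm.coe_pow]
      rfl
    exact hW2 (g n) (htK (g n) (hg1 n hn)) k hk1 _ han (hkey ▸ ham)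
  have himg : g '' S ⊆ ↑t := by
    rintro _ ⟨n, hn, rfl⟩
    exact hg1 n hn
  have hfin : S.Finite := Set.Finite.of_finite_image (t.finite_toSet.subset himg) hinj
  refine ⟨hfin, ?_⟩
  have h1 : S.ncard = (g '' S).ncard := (Set.ncard_image_of_injOn hinj).symm
  have h2 : (g '' S).ncard ≤ t.card := by
    have h3 := Set.ncard_le_ncard himg t.finite_toSet
    simpa using h3
  omega
end
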